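/- arXiv:1708.02064 — 6 statements merged into one kernel-verified Lean document; each statement's English description precedes it below -/
import Mathlib

section
/- For any positive integer n, any cardinal λ, and any elements α, β of the semigroup I_λ^n, the set α·I_λ^n·β = {αγβ : γ ∈ I_λ^n} is finite. -/
open Set Topology

universe v

namespace ISemi

/-- The set of partial injective transformations (partial bijections) of `ι`
with rank (cardinality of the range, equivalently of the domain) at most `n`. -/
def Elem (ι : Type*) (n : ℕ) : Type _ :=
  {f : ι ≃. ι // {a : ι | (f a).isSome}.encard ≤ (n : ℕ∞)}

variable {ι : Type*} {n : ℕ}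

/-- Composition of partial bijections (written multiplicatively). -/
instance : Semigroup (Elem ι n) where
  mul f g := ⟨f.1.trans g.1, by
    refine le_trans (Set.encard_mono ?_) f.2
    intro a ha
    simp only [Set.mem_setOf_eq] at *
    rcases Option.isSome_iff_exists.1 ha with ⟨c, hc⟩
    rcases (PEquiv.trans_eq_some _ _ _ _).1 hc with ⟨b, hb, -⟩
    simp [hb]⟩
  mul_assoc f g h := Subtype.ext (PEquiv.trans_assoc f.1 g.1 h.1)

/-- The inverse partial bijection. -/
def inv (f : Elem ι n) : Elem ι n := ⟨f.1.symm, by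
  have key : ∀ (g : ι ≃. ι), {b : ι | (g.symm b).isSome} ⊆
      (fun p : {a : ι | (g a).isSome} => (g p.1).get p.2) '' Set.univ := by
    intro g b hb
    rcases Option.isSome_iff_exists.1 hb with ⟨a, ha⟩
    have ha' : b ∈ g a := (PEquiv.mem_iff_mem g).1 (Option.mem_def.2 ha)
    simp only [Option.mem_def] at ha'
    refine ⟨⟨a, ?_⟩, Set.mem_univ _, ?_⟩
    · simp [Set.mem_setOf_eq, ha']
    · simp [ha']
  calc {b : ι | (f.1.symm b).isSome}.encard
      ≤ ((fun p : {a : ι | (f.1 a).isSome} => (f.1 p.1).get p.2) '' Set.univ).encard :=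
        Set.encard_mono (key f.1)
    _ ≤ (Set.univ : Set {a : ι | (f.1 a).isSome}).encard := Set.encard_image_le _ _
    _ = {a : ι | (f.1 a).isSome}.encard := by rw [Set.encard_univ, ENat.card_coe_set_eq]
    _ ≤ (n : ℕ∞) := f.2⟩

/-- The zero (the empty partial map). -/
def zero (ι : Type*) (n : ℕ) : Elem ι n := ⟨⊥, by simp [PEquiv.bot_apply]⟩

/-- idempotents -/
def IsIdem (e : Elem ι n) : Prop := e * e = e

/-- The natural partial order on the inverse semigroup `Elem ι n`:
`f ≼ g` iff `f = e * g` for some idempotent `e`. -/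
def nle (f g : Elem ι n) : Prop := ∃ e : Elem ι n, IsIdem e ∧ f = e * g

/-- up-set of `f` w.r.t. the natural partial order -/
def upset (f : Elem ι n) : Set (Elem ι n) := {g | nle f g}

/-- the rank of a partial bijection: the cardinality of its domain (= range) -/
noncomputable def rank (f : Elem ι n) : ℕ∞ := {a : ι | (f.1 a).isSome}.encard

def dom (f : Elem ι n) : Set ι := {a : ι | (f.1 a).isSome}

def ran (f : Elem ι n) : Set ι := {b : ι | (f.1.symm b).isSome}

/-- A topology on `Elem ι n` is shift-continuous if all left and right
translations are continuous. -/
def ShiftContinuous (ι : Type*) (n : ℕ) [TopologicalSpace (Elem ι n)] : Prop :=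
  ∀ a : Elem ι n, Continuous (fun x : Elem ι n => a * x) ∧
    Continuous (fun x : Elem ι n => x * a)

/-- A space is feebly compact if every locally finite family of nonempty open
sets is finite. -/
def FeeblyCompact (X : Type*) [TopologicalSpace X] : Prop :=
  ∀ 𝒰 : Set (Set X), (∀ U ∈ 𝒰, IsOpen U ∧ U.Nonempty) →
    LocallyFinite (fun U : 𝒰 => (U : Set X)) → 𝒰.Finite

/-- A space is `d`-feebly compact if every discrete family of open sets is
finite; a family is discrete if every point has a neighbourhood meeting at
most one member of the family. -/
def DFeeblyCompact (X : Type*) [TopologicalSpace X] : Prop :=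
  ∀ 𝒰 : Set (Set X), (∀ U ∈ 𝒰, IsOpen U) →
    (∀ x : X, ∃ V ∈ 𝓝 x, {U ∈ 𝒰 | (U ∩ V).Nonempty}.Subsingleton) → 𝒰.Finite

/-- countably pracompact: there is a dense set `A` such that every infinite
subset of `A` has an accumulation point in `X`. -/
def CountablyPracompact (X : Type*) [TopologicalSpace X] : Prop :=
  ∃ A : Set X, Dense A ∧ ∀ B ⊆ A, B.Infinite → ∃ x : X, AccPt x (Filter.principal B)

/-- H-closed: closed in every Hausdorff space in which it embeds. -/
def HClosed (X : Type*) [TopologicalSpace X] : Prop :=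
  ∀ (Y : Type v) (_ : TopologicalSpace Y), T2Space Y →
    ∀ e : X → Y, IsEmbedding e → IsClosed (Set.range e)

/-- infra H-closed: every continuous image in a first-countable Hausdorff
space is closed. -/
def InfraHClosed (X : Type*) [TopologicalSpace X] : Prop :=
  ∀ (Y : Type v) (_ : TopologicalSpace Y), T2Space Y →
    FirstCountableTopology Y → ∀ f : X → Y, Continuous f → IsClosed (Set.range f)

/-- `Y`-compactness: every continuous image in `Y` is compact. -/
def YCompact (X : Type*) [TopologicalSpace X] (Y : Type*) [TopologicalSpace Y] : Prop :=
  ∀ f : X → Y, Continuous f → IsCompact (Set.range f)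

/-- scattered: every nonempty subset has a point isolated in it. -/
def Scattered (X : Type*) [TopologicalSpace X] : Prop :=
  ∀ S : Set X, S.Nonempty → ∃ x ∈ S, ∃ U : Set X, IsOpen U ∧ U ∩ S = {x}

/-- semiregular: there is a base consisting of regular open sets. -/
def Semiregular (X : Type*) [TopologicalSpace X] : Prop :=
  ∃ B : Set (Set X), TopologicalSpace.IsTopologicalBasis B ∧
    ∀ U ∈ B, interior (closure U) = U

/-- countably compact: every countable open cover has a finite subcover. -/
def CountablyCompact (X : Type*) [TopologicalSpace X] : Prop :=
  ∀ 𝒰 : Set (Set X), 𝒰.Countable → (∀ U ∈ 𝒰, IsOpen U) → ⋃₀ 𝒰 = Set.univ →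
    ∃ 𝒱 ⊆ 𝒰, 𝒱.Finite ∧ ⋃₀ 𝒱 = Set.univ

end ISemi

theorem stmt1 (ι : Type*) (n : ℕ) (hn : 0 < n) (a b : ISemi.Elem ι n) :
    {x : ISemi.Elem ι n | ∃ c : ISemi.Elem ι n, x = a * c * b}.Finite := by
  classical
  set D : Set ι := {y | (a.1 y).isSome} with hDdef
  set R : Set ι := {z | (b.1.symm z).isSome} with hRdef
  have hD : D.Finite := Set.finite_of_encard_le_coe a.2
  have hR : R.Finite := Set.finite_of_encard_le_coe (ISemi.inv b).2
  -- key facts about elements of the set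
  have hmul : ∀ (c : ISemi.Elem ι n) (y : ι),
      (a * c * b).1 y = ((a.1 y).bind c.1).bind b.1 := fun c y => rfl
  have hnone : ∀ (c : ISemi.Elem ι n) (y : ι), y ∉ D → (a * c * b).1 y = none := by
    intro c y hy
    rw [hmul]
    have : a.1 y = none := by
      simpa [hDdef, Option.isSome_iff_exists, Option.eq_none_iff_forall_not_mem] using hy
    simp [this]
  have hran : ∀ (c : ISemi.Elem ι n) (y z : ι), (a * c * b).1 y = some z → z ∈ R := by
    intro c y z hz
    rw [hmul] at hz
    rcases Option.bind_eq_some_iff.1 hz with ⟨w, hw, hwz⟩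
    have : w ∈ b.1.symm z := (PEquiv.mem_iff_mem b.1).2 (Option.mem_def.2 hwz)
    simp only [hRdef, Set.mem_setOf_eq]
    exact Option.isSome_iff_exists.2 ⟨w, Option.mem_def.1 this⟩
  -- injection into a finite type
  haveI : Finite ↥D := hD.to_subtype
  haveI : Finite ↥R := hR.to_subtype
  haveI := Fintype.ofFinite ↥R
  haveI : Finite (Option ↥R) := Finite.of_fintype _
  have : Finite ↥{x : ISemi.Elem ι n | ∃ c : ISemi.Elem ι n, x = a * c * b} := by
    have hinj : Function.Injective
        (fun x : {x : ISemi.Elem ι n | ∃ c : ISemi.Elem ι n, x = a * c * b} =>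
          fun y : D => (x.1.1 y.1).bind
            (fun z => if h : z ∈ R then some (⟨z, h⟩ : R) else none)) := by
      intro x x' h
      ext1
      apply Subtype.ext
      apply PEquiv.ext
      intro y
      rcases x.2 with ⟨c, hc⟩
      rcases x'.2 with ⟨c', hc'⟩
      by_cases hy : y ∈ D
      · have hxy := congrFun h ⟨y, hy⟩
        simp only at hxy
        cases h1 : x.1.1 y with
        | none =>
          cases h2 : x'.1.1 y with
          | none => rfl
          | some z' =>
            have hz' : z' ∈ R := hran c' y z' (hc' ▸ h2)
            rw [h1, h2] at hxy
            simp [hz'] at hxy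
        | some z =>
          have hz : z ∈ R := hran c y z (hc ▸ h1)
          cases h2 : x'.1.1 y with
          | none =>
            rw [h1, h2] at hxy
            simp [hz] at hxy
          | some z' =>
            have hz' : z' ∈ R := hran c' y z' (hc' ▸ h2)
            rw [h1, h2] at hxy
            simp [hz, hz'] at hxy
            exact congrArg some hxy
      · rw [hc, hc', hnone c y hy, hnone c' y hy]
    exact Finite.of_injective _ hinj
  exact Set.toFinite _
end

section
/- Let n be a positive integer, λ an infinite cardinal, and τ a shift-continuous T₁ topology on I_λ^n. Then the topological space (I_λ^n, τ) is functionally Hausdorff: for any two distinct points there is a continuous function to [0,1] separating them. -/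
open Set Topology

universe v

namespace ISemi

variable {ι : Type*} {n : ℕ}

lemma mul_apply' (f g : Elem ι n) (a : ι) : (f * g).1 a = (f.1 a).bind g.1 := rfl

lemma trans_apply' (f g : ι ≃. ι) (a : ι) : (f.trans g) a = (f a).bind g := rfl

lemma idem_apply {e : Elem ι n} (he : IsIdem e) {a b : ι} (hab : e.1 a = some b) :
    b = a := by
  have h1 : e.1 b = some b := by
    have := congrArg (fun z : Elem ι n => z.1 a) he
    simp only [mul_apply', hab, Option.bind_some] at this
    exact this
  have h2 : e.1.symm b = some b := e.1.eq_some_iff.2 h1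
  have h3 : e.1.symm b = some a := e.1.eq_some_iff.2 hab
  rw [h2] at h3
  exact Option.some_injective _ h3

lemma nle_iff {f g : Elem ι n} :
    nle f g ↔ ∀ a : ι, (f.1 a).isSome → f.1 a = g.1 a := by
  constructor
  · rintro ⟨e, he, rfl⟩ a ha
    rw [mul_apply'] at ha ⊢
    rcases he' : e.1 a with _ | b
    · simp [he'] at ha
    · have hb : b = a := idem_apply he he'
      subst hb
      simp [he']
  · intro h
    refine ⟨⟨f.1.trans f.1.symm, ?_⟩, ?_, ?_⟩
    · refine le_trans (Set.encard_mono ?_) f.2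
      intro a ha
      simp only [Set.mem_setOf_eq, trans_apply'] at ha ⊢
      rcases hb : f.1 a with _ | b
      · rw [hb] at ha; simp at ha
      · simp [hb]
    · apply Subtype.ext
      apply PEquiv.ext
      intro a
      show ((f.1.trans f.1.symm).trans (f.1.trans f.1.symm)) a = (f.1.trans f.1.symm) a
      rcases hb : f.1 a with _ | b
      · simp [trans_apply', hb]
      · have hs : f.1.symm b = some a := f.1.eq_some_iff.2 hb
        simp [trans_apply', hb, hs]
    · apply Subtype.ext
      apply PEquiv.ext
      intro a
      show f.1 a = ((f.1.trans f.1.symm).trans g.1) a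
      rcases hb : f.1 a with _ | b
      · simp [trans_apply', hb]
      · have hs : f.1.symm b = some a := f.1.eq_some_iff.2 hb
        have hfg := h a (by simp [hb])
        rw [hb] at hfg
        simp [trans_apply', hb, hs, ← hfg]

lemma nle_refl (f : Elem ι n) : nle f f := nle_iff.2 fun _ _ => rfl

lemma nle_antisymm {f g : Elem ι n} (h1 : nle f g) (h2 : nle g f) : f = g := by
  rw [nle_iff] at h1 h2
  apply Subtype.ext
  apply PEquiv.ext
  intro a
  rcases hb : f.1 a with _ | b
  · rcases hc : g.1 a with _ | c
    · rfl
    · have := h2 a (by simp [hc]); rw [hc, hb] at this; exact this.symm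
  · have := h1 a (by simp [hb]); rw [hb] at this; exact this

section Topo

variable [DecidableEq ι] [TopologicalSpace (Elem ι n)] [T1Space (Elem ι n)]

/-- single-point partial bijection as an element of `Elem ι n` (for `0 < n`). -/
def sg (hn : 0 < n) (a b : ι) : Elem ι n :=
  ⟨PEquiv.single a b, by
    have hset : {x : ι | ((PEquiv.single a b) x).isSome} = {a} := by
      ext x
      by_cases hx : x = a
      · subst hx; simp [PEquiv.single_apply]
      · simp [PEquiv.single_apply_of_ne (Ne.symm hx), hx]
    rw [hset, Set.encard_singleton]
    exact_mod_cast hn⟩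

lemma sg_mul_mul (hn : 0 < n) (a b : ι) (y : Elem ι n) (hy : y.1 a = some b) :
    sg hn a a * y * sg hn b b = sg hn a b := by
  apply Subtype.ext
  apply PEquiv.ext
  intro c
  show (((PEquiv.single a a c).bind y.1).bind (PEquiv.single b b)) = PEquiv.single a b c
  by_cases hc : c = a
  · subst hc
    simp [PEquiv.single_apply, hy]
  · simp [PEquiv.single_apply_of_ne (Ne.symm hc)]

lemma sg_mul_mul_ne (hn : 0 < n) (a b : ι) (y : Elem ι n) (hy : y.1 a ≠ some b) :
    sg hn a a * y * sg hn b b = zero ι n := by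
  apply Subtype.ext
  apply PEquiv.ext
  intro c
  show (((PEquiv.single a a c).bind y.1).bind (PEquiv.single b b)) = (⊥ : ι ≃. ι) c
  rw [PEquiv.bot_apply]
  by_cases hc : c = a
  · subst hc
    rw [PEquiv.single_apply]
    rcases hd : y.1 c with _ | d
    · simp [hd]
    · have hdb : d ≠ b := fun h => hy (by rw [hd, h])
      simp [hd, PEquiv.single_apply_of_ne (Ne.symm hdb)]
  · simp [PEquiv.single_apply_of_ne (Ne.symm hc)]

lemma sg_ne_zero (hn : 0 < n) (a b : ι) : sg hn a b ≠ zero ι n := by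
  intro h
  have hz : (sg hn a b).1 a = (zero ι n).1 a := by rw [h]
  rw [show (sg hn a b).1 a = some b from PEquiv.single_apply a b] at hz
  rw [show (zero ι n).1 a = none from PEquiv.bot_apply a] at hz
  exact Option.some_ne_none _ hz

lemma isClopen_S (hshift : ShiftContinuous ι n) (hn : 0 < n) (a b : ι) :
    IsClopen {y : Elem ι n | y.1 a = some b} := by
  set g : Elem ι n → Elem ι n := fun y => sg hn a a * y * sg hn b b with hg
  have hgc : Continuous g := ((hshift (sg hn b b)).2).comp ((hshift (sg hn a a)).1)
  have heq1 : {y : Elem ι n | y.1 a = some b} = g ⁻¹' {sg hn a b} := by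
    ext y
    simp only [Set.mem_setOf_eq, Set.mem_preimage, Set.mem_singleton_iff, hg]
    constructor
    · exact sg_mul_mul hn a b y
    · intro h
      by_contra hy
      exact sg_ne_zero hn a b (by rw [← h, sg_mul_mul_ne hn a b y hy])
  have heq2 : {y : Elem ι n | y.1 a = some b} = g ⁻¹' {zero ι n}ᶜ := by
    ext y
    simp only [Set.mem_setOf_eq, Set.mem_preimage, Set.mem_compl_iff,
      Set.mem_singleton_iff, hg]
    constructor
    · intro h hz
      exact sg_ne_zero hn a b (by rw [← sg_mul_mul hn a b y h, hz])
    · intro h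
      by_contra hy
      exact h (sg_mul_mul_ne hn a b y hy)
  constructor
  · rw [heq1]; exact (isClosed_singleton).preimage hgc
  · rw [heq2]; exact (isClosed_singleton.isOpen_compl).preimage hgc

lemma isClopen_upset (hshift : ShiftContinuous ι n) (hn : 0 < n) (f : Elem ι n) :
    IsClopen (upset f) := by
  have hfin : {a : ι | (f.1 a).isSome}.Finite := Set.finite_of_encard_le_coe f.2
  have heq : upset f = ⋂ a ∈ {a : ι | (f.1 a).isSome}, {y : Elem ι n | y.1 a = f.1 a} := by
    ext y
    simp only [upset, Set.mem_setOf_eq, Set.mem_iInter, nle_iff]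
    constructor
    · intro h a ha
      exact (h a ha).symm
    · intro h a ha
      exact (h a ha).symm
  rw [heq]
  refine hfin.isClopen_biInter ?_
  intro a ha
  simp only [Set.mem_setOf_eq] at ha
  rcases Option.isSome_iff_exists.1 ha with ⟨b, hb⟩
  have hTS : {y : Elem ι n | y.1 a = f.1 a} = {y : Elem ι n | y.1 a = some b} := by
    ext y; simp [hb]
  rw [hTS]
  exact isClopen_S hshift hn a b

end Topo

end ISemi


theorem stmt6 (ι : Type*) [Infinite ι] (n : ℕ) (hn : 0 < n)
    [TopologicalSpace (ISemi.Elem ι n)] [T1Space (ISemi.Elem ι n)]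
    (hshift : ISemi.ShiftContinuous ι n) :
    ∀ x y : ISemi.Elem ι n, x ≠ y → ∃ f : ISemi.Elem ι n → ℝ,
      Continuous f ∧ (∀ z, f z ∈ Set.Icc (0 : ℝ) 1) ∧ f x = 0 ∧ f y = 1 := by
  intro x y hxy
  classical
  obtain ⟨U, hU, hyU, hxU⟩ : ∃ U : Set (ISemi.Elem ι n), IsClopen U ∧ y ∈ U ∧ x ∉ U := by
    by_cases h : ISemi.nle x y
    · have h2 : ¬ ISemi.nle y x := fun h2 => hxy (ISemi.nle_antisymm h h2)
      exact ⟨ISemi.upset y, ISemi.isClopen_upset hshift hn y,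
        ISemi.nle_refl y, h2⟩
    · exact ⟨(ISemi.upset x)ᶜ, (ISemi.isClopen_upset hshift hn x).compl,
        h, fun hc => hc (ISemi.nle_refl x)⟩
  refine ⟨fun z => if z ∈ U then (1 : ℝ) else 0, ?_, ?_, ?_, ?_⟩
  · refine Continuous.if ?_ continuous_const continuous_const
    intro a ha
    rw [show {a : ISemi.Elem ι n | a ∈ U} = U from rfl, hU.frontier_eq] at ha
    exact absurd ha (Set.notMem_empty a)
  · intro z
    by_cases hz : z ∈ U <;> simp [hz]
  · simp [hxU]
  · simp [hyU]
end

section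
/- Let n be a positive integer, λ an infinite cardinal, and τ a shift-continuous T₁ topology on I_λ^n. Then every element α of I_λ^n of rank exactly n is an isolated point of (I_λ^n, τ). -/
open Set Topology

universe v

namespace ISemi

variable {ι : Type*} {n : ℕ}

lemma F_mem (a x : Elem ι n) (b c : ι) :
    c ∈ ((a * inv a) * x * (inv a * a)).1 b ↔
      b ∈ dom a ∧ c ∈ ran a ∧ c ∈ x.1 b := by
  classical
  have h1 : ((a * inv a) * x * (inv a * a)).1
      = ((a.1.trans a.1.symm).trans x.1).trans (a.1.symm.trans a.1) := rfl
  rw [h1, PEquiv.self_trans_symm, PEquiv.symm_trans_self]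
  simp only [PEquiv.mem_trans, PEquiv.mem_ofSet_iff, dom, ran, Set.mem_setOf_eq]
  constructor
  · rintro ⟨y, ⟨z, ⟨rfl, hz⟩, hy⟩, rfl, hc⟩
    exact ⟨hz, hc, hy⟩
  · rintro ⟨hb, hc, hx⟩
    exact ⟨c, ⟨b, ⟨rfl, hb⟩, hx⟩, rfl, hc⟩

lemma finite_dom (f : Elem ι n) : (dom f).Finite :=
  Set.finite_of_encard_le_coe f.2

lemma finite_ran (f : Elem ι n) : (ran f).Finite :=
  Set.finite_of_encard_le_coe (inv f).2

end ISemi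

theorem stmt10 (ι : Type*) [Infinite ι] (n : ℕ) (hn : 0 < n)
    [TopologicalSpace (ISemi.Elem ι n)] [T1Space (ISemi.Elem ι n)]
    (hshift : ISemi.ShiftContinuous ι n) (a : ISemi.Elem ι n) (ha : ISemi.rank a = (n : ℕ∞)) :
    IsOpen {a} := by
  classical
  open ISemi in
  set F : ISemi.Elem ι n → ISemi.Elem ι n :=
    fun x => (a * ISemi.inv a) * x * (ISemi.inv a * a) with hF
  have hFcont : Continuous F :=
    (hshift (ISemi.inv a * a)).2.comp (hshift (a * ISemi.inv a)).1
  set S : Set (ISemi.Elem ι n) :=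
    {x | ∀ b c : ι, c ∈ x.1 b → b ∈ ISemi.dom a ∧ c ∈ ISemi.ran a} with hS
  -- range of F lies in S
  have hrange : ∀ x, F x ∈ S := by
    intro x b c hc
    rw [hF] at hc
    rcases (ISemi.F_mem a x b c).1 hc with ⟨h1, h2, _⟩
    exact ⟨h1, h2⟩
  -- S is finite
  have hSfin : S.Finite := by
    have hgraph : Set.InjOn (fun x : ISemi.Elem ι n => {p : ι × ι | p.2 ∈ x.1 p.1}) S := by
      intro x _ y _ hxy
      refine Subtype.ext (PEquiv.ext fun b => ?_)
      refine Option.ext fun c => ?_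
      have := Set.ext_iff.1 hxy (b, c)
      simpa using this
    have himg : (fun x : ISemi.Elem ι n => {p : ι × ι | p.2 ∈ x.1 p.1}) '' S ⊆
        {t | t ⊆ (ISemi.dom a) ×ˢ (ISemi.ran a)} := by
      rintro _ ⟨x, hx, rfl⟩ ⟨b, c⟩ hbc
      exact Set.mem_prod.2 (hx b c hbc)
    have hfin : ((fun x : ISemi.Elem ι n => {p : ι × ι | p.2 ∈ x.1 p.1}) '' S).Finite :=
      Set.Finite.subset ((ISemi.finite_dom a).prod (ISemi.finite_ran a)).finite_subsets himg
    exact (hfin.of_finite_image hgraph)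
  -- F x = a ↔ x = a
  have hFa : ∀ x, F x = a ↔ x = a := by
    intro x
    constructor
    · intro hx
      -- dom a ⊆ dom x
      have hsub : ISemi.dom a ⊆ ISemi.dom x := by
        intro b hb
        rcases Option.isSome_iff_exists.1 hb with ⟨c, hc⟩
        have hca : c ∈ (F x).1 b := by rw [hx]; exact hc
        rw [hF] at hca
        rcases (ISemi.F_mem a x b c).1 hca with ⟨-, -, h3⟩
        simpa [ISemi.dom] using Option.isSome_iff_exists.2 ⟨c, h3⟩
      have hdomeq : ISemi.dom a = ISemi.dom x := by
        refine ((ISemi.finite_dom x).eq_of_subset_of_encard_le' hsub ?_).symm ▸ rfl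
        calc (ISemi.dom x).encard ≤ (n : ℕ∞) := x.2
          _ = (ISemi.dom a).encard := ha.symm
      -- agree everywhere
      refine (Subtype.ext (PEquiv.ext fun b => ?_)).symm
      by_cases hb : b ∈ ISemi.dom a
      · rcases Option.isSome_iff_exists.1 hb with ⟨c, hc⟩
        have hca : c ∈ (F x).1 b := by rw [hx]; exact hc
        rw [hF] at hca
        rcases (ISemi.F_mem a x b c).1 hca with ⟨-, -, h3⟩
        rw [hc]; exact h3.symm
      · have hbx : b ∉ ISemi.dom x := by rw [← hdomeq]; exact hb
        have h1 : a.1 b = none := by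
          simpa [ISemi.dom, Option.isSome_iff_exists, eq_comm (a := none)] using
            Option.not_isSome_iff_eq_none.1 hb
        have h2 : x.1 b = none := Option.not_isSome_iff_eq_none.1 hbx
        rw [h1, h2]
    · intro hxa
      rw [hxa, hF]
      refine Subtype.ext (PEquiv.ext fun b => ?_)
      refine Option.ext fun c => ?_
      show c ∈ ((a * ISemi.inv a) * a * (ISemi.inv a * a)).1 b ↔ c ∈ a.1 b
      rw [ISemi.F_mem a a b c]
      constructor
      · rintro ⟨-, -, h⟩; exact h
      · intro h
        refine ⟨Option.isSome_iff_exists.2 ⟨c, h⟩, ?_, h⟩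
        have : a.1.symm c = some b := (PEquiv.eq_some_iff a.1).2 h
        simp [ISemi.ran, this]
  -- {a} is the preimage of the cofinite open set (S \ {a})ᶜ
  have hkey : {a} = F ⁻¹' ((S \ {a})ᶜ) := by
    ext x
    simp only [Set.mem_singleton_iff, Set.mem_preimage, Set.mem_compl_iff, Set.mem_diff,
      Set.mem_singleton_iff, not_and, not_not]
    constructor
    · intro hxa _
      rw [hxa]
      exact (hFa a).2 rfl
    · intro h
      exact (hFa x).1 (h (hrange x))
  rw [hkey]
  exact (((hSfin.diff (t := {a})).isClosed).isOpen_compl).preimage hFcont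
end

section
/- Define τ₀ on I_λ^n by declaring every non-zero element isolated and letting the whole space I_λ^n be the unique open neighbourhood of the zero (the empty partial map). Then τ₀ is a T₀ (but not T₁) topology making I_λ^n a semitopological semigroup with continuous inversion (in fact the multiplication and inversion are continuous). -/
open Set Topology

universe v

open ISemi in
/-- The topology in which every non-zero element is isolated and the whole
space is the unique open neighbourhood of zero. -/
def tau0 (ι : Type*) (n : ℕ) : TopologicalSpace (ISemi.Elem ι n) where
  IsOpen U := ISemi.zero ι n ∈ U → U = Set.univ
  isOpen_univ := fun _ => rfl
  isOpen_inter := by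
    intro U V hU hV h
    rw [hU h.1, hV h.2, Set.univ_inter]
  isOpen_sUnion := by
    intro S hS h
    obtain ⟨U, hU, hzU⟩ := h
    exact Set.eq_univ_of_univ_subset ((hS U hU hzU) ▸ Set.subset_sUnion_of_mem hU)

namespace ISemi

lemma tau0_isOpen_iff {ι : Type*} {n : ℕ} (U : Set (Elem ι n)) :
    IsOpen[tau0 ι n] U ↔ (zero ι n ∈ U → U = Set.univ) := Iff.rfl

lemma tau0_isOpen_singleton {ι : Type*} {n : ℕ} {x : Elem ι n} (hx : x ≠ zero ι n) :
    IsOpen[tau0 ι n] {x} := by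
  intro h
  exact absurd (Set.mem_singleton_iff.1 h).symm hx

lemma zero_mul' {ι : Type*} {n : ℕ} (b : Elem ι n) : zero ι n * b = zero ι n :=
  Subtype.ext (PEquiv.bot_trans _)

lemma mul_zero' {ι : Type*} {n : ℕ} (b : Elem ι n) : b * zero ι n = zero ι n :=
  Subtype.ext (PEquiv.trans_bot _)

lemma inv_zero' {ι : Type*} {n : ℕ} : inv (zero ι n) = zero ι n :=
  Subtype.ext PEquiv.symm_bot

/-- a nonzero element, given `0 < n` and `ι` nonempty -/
lemma exists_ne_zero (ι : Type*) [Nonempty ι] (n : ℕ) (hn : 0 < n) :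
    ∃ f : Elem ι n, f ≠ zero ι n := by
  classical
  obtain ⟨a⟩ := ‹Nonempty ι›
  refine ⟨⟨PEquiv.single a a, ?_⟩, ?_⟩
  · have : {x : ι | ((PEquiv.single a a) x).isSome} = {a} := by
      ext x
      simp only [Set.mem_setOf_eq, Set.mem_singleton_iff, PEquiv.single,
        Option.isSome_iff_exists, PEquiv.coe_mk_apply]
      aesop
    rw [this, Set.encard_singleton]
    exact_mod_cast Nat.one_le_iff_ne_zero.2 hn.ne'
  · intro h
    have := congrArg (fun f : Elem ι n => f.1 a) h
    simp [zero, PEquiv.single, PEquiv.bot_apply] at this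

end ISemi

theorem stmt11 (ι : Type*) [Infinite ι] (n : ℕ) (hn : 0 < n) :
    @T0Space (ISemi.Elem ι n) (tau0 ι n) ∧
    ¬ @T1Space (ISemi.Elem ι n) (tau0 ι n) ∧
    @Continuous (ISemi.Elem ι n × ISemi.Elem ι n) (ISemi.Elem ι n)
      (@instTopologicalSpaceProd _ _ (tau0 ι n) (tau0 ι n)) (tau0 ι n)
      (fun p => p.1 * p.2) ∧
    @Continuous (ISemi.Elem ι n) (ISemi.Elem ι n) (tau0 ι n) (tau0 ι n) ISemi.inv := by
  letI := tau0 ι n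
  refine ⟨?_, ?_, ?_, ?_⟩
  · -- T0
    refine ⟨fun x y h => ?_⟩
    by_contra hxy
    rcases eq_or_ne x (ISemi.zero ι n) with hx | hx
    · have hy : y ≠ ISemi.zero ι n := fun hy => hxy (hx.trans hy.symm)
      have := (h.mem_open_iff (ISemi.tau0_isOpen_singleton hy)).2 rfl
      exact hxy this
    · have := (h.mem_open_iff (ISemi.tau0_isOpen_singleton hx)).1 rfl
      exact hxy this.symm
  · -- not T1
    intro hT1
    obtain ⟨f, hf⟩ := ISemi.exists_ne_zero ι n hn
    have hcl : IsClosed ({f} : Set (ISemi.Elem ι n)) := isClosed_singleton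
    have hopen : IsOpen ({f}ᶜ : Set (ISemi.Elem ι n)) := hcl.isOpen_compl
    have : ({f}ᶜ : Set (ISemi.Elem ι n)) = Set.univ :=
      hopen (by simpa using hf.symm)
    have : f ∈ ({f}ᶜ : Set (ISemi.Elem ι n)) := this ▸ Set.mem_univ f
    exact this rfl
  · -- multiplication continuous
    rw [continuous_def]
    intro U hU
    rcases Classical.em (ISemi.zero ι n ∈ U) with hz | hz
    · rw [hU hz]
      simp
    · have hS : (fun p : ISemi.Elem ι n × ISemi.Elem ι n => p.1 * p.2) ⁻¹' U =
          ⋃ p ∈ (fun p : ISemi.Elem ι n × ISemi.Elem ι n => p.1 * p.2) ⁻¹' U,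
            ({p.1} : Set (ISemi.Elem ι n)) ×ˢ ({p.2} : Set (ISemi.Elem ι n)) := by
        ext q
        constructor
        · intro hq
          exact Set.mem_biUnion hq (by simp)
        · intro hq
          obtain ⟨p, hp, h⟩ := Set.mem_iUnion₂.1 hq
          simp only [Set.mem_prod, Set.mem_singleton_iff] at h
          rwa [show q = p from Prod.ext h.1 h.2]
      rw [hS]
      refine isOpen_biUnion fun p hp => ?_
      have h1 : p.1 ≠ ISemi.zero ι n := by
        intro h
        have : p.1 * p.2 = ISemi.zero ι n := by rw [h]; exact ISemi.zero_mul' p.2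
        exact hz (this ▸ hp)
      have h2 : p.2 ≠ ISemi.zero ι n := by
        intro h
        have : p.1 * p.2 = ISemi.zero ι n := by rw [h]; exact ISemi.mul_zero' p.1
        exact hz (this ▸ hp)
      exact (ISemi.tau0_isOpen_singleton h1).prod (ISemi.tau0_isOpen_singleton h2)
  · -- inversion continuous
    rw [continuous_def]
    intro U hU
    intro hmem
    have : ISemi.zero ι n ∈ U := by
      simpa [ISemi.inv_zero'] using hmem
    rw [hU this]
    simp
end

section
/- Let n be a positive integer, λ an infinite cardinal. Every countably compact scattered T₃ space is sequentially compact; consequently the compact semitopological semigroup (I_λ^n, τ_c) is sequentially compact. -/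
open Set Topology

universe v

open ISemi in
/-- The base `B_c` of the topology `τ_c`. -/
def Bc (ι : Type*) (n : ℕ) : Set (Set (ISemi.Elem ι n)) :=
  {V | ∃ (f : ISemi.Elem ι n) (F : Finset (ISemi.Elem ι n)),
    ↑F ⊆ ISemi.upset f \ {f} ∧ V = ISemi.upset f \ ⋃ g ∈ F, ISemi.upset g}

/-- The topology `τ_c` generated by the base `B_c`. -/
def tauc (ι : Type*) (n : ℕ) : TopologicalSpace (ISemi.Elem ι n) :=
  TopologicalSpace.generateFrom (Bc ι n)

universe u

section Helpers
open Filter ISemi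
variable {ι : Type*} {n : ℕ}

/-- the graph of a partial bijection -/
def Gr (f : Elem ι n) : Set (ι × ι) := {p | f.1 p.1 = some p.2}

lemma mul_val (f g : Elem ι n) : (f * g).1 = f.1.trans g.1 := rfl

lemma encard_Gr (f : Elem ι n) : (Gr f).encard ≤ (n : ℕ∞) := by
  have hinj : Set.InjOn Prod.fst (Gr f) := by
    rintro ⟨a, b⟩ hab ⟨c, d⟩ hcd (h : a = c)
    subst h
    simp only [Gr, mem_setOf_eq] at hab hcd
    rw [hab] at hcd
    simp_all
  calc (Gr f).encard = (Prod.fst '' Gr f).encard := (hinj.encard_image).symm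
    _ ≤ {a : ι | (f.1 a).isSome}.encard := by
        refine Set.encard_mono ?_
        rintro a ⟨⟨a', b⟩, hab, rfl⟩
        simp only [Gr, mem_setOf_eq] at hab ⊢
        simp [hab]
    _ ≤ (n : ℕ∞) := f.2

lemma nle_iff {f g : Elem ι n} : nle f g ↔ Gr f ⊆ Gr g := by
  constructor
  · rintro ⟨e, he, rfl⟩
    rintro ⟨a, b⟩ hab
    simp only [Gr, mem_setOf_eq, mul_val] at hab ⊢
    obtain ⟨c, hc, hgc⟩ := (PEquiv.trans_eq_some _ _ _ _).1 hab
    have hee : e.1.trans e.1 = e.1 := congrArg Subtype.val he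
    have hcc : e.1 c = some c := by
      have h1 : (e.1.trans e.1) a = some c := by rw [hee]; exact hc
      obtain ⟨d, hd, hdc⟩ := (PEquiv.trans_eq_some _ _ _ _).1 h1
      rw [hc] at hd
      injection hd with hd
      subst hd; exact hdc
    have hac : a = c := PEquiv.inj e.1 (Option.mem_def.2 hc) (Option.mem_def.2 hcc)
    rwa [hac]
  · intro h
    classical
    set A : Set ι := {a | (f.1 a).isSome} with hA
    refine ⟨⟨PEquiv.ofSet A, ?_⟩, ?_, ?_⟩
    · have : {a : ι | ((PEquiv.ofSet A) a).isSome} = A := by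
        ext a
        by_cases h' : a ∈ A <;> simp [PEquiv.ofSet, h']
      rw [this]; exact f.2
    · refine Subtype.ext (PEquiv.ext fun a => ?_)
      show ((PEquiv.ofSet A) a).bind (PEquiv.ofSet A) = (PEquiv.ofSet A) a
      by_cases ha : a ∈ A <;> simp [PEquiv.ofSet, ha]
    · refine Subtype.ext (PEquiv.ext fun a => ?_)
      show f.1 a = ((PEquiv.ofSet A) a).bind g.1
      by_cases ha : a ∈ A
      · obtain ⟨b, hb⟩ := Option.isSome_iff_exists.1 ha
        have : g.1 a = some b := h (show (a, b) ∈ Gr f from hb)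
        simp [PEquiv.ofSet, ha, hb, this]
      · have : f.1 a = none := Option.not_isSome_iff_eq_none.1 ha
        simp [PEquiv.ofSet, ha, this]

lemma mem_upset_iff {f g : Elem ι n} : g ∈ upset f ↔ Gr f ⊆ Gr g := nle_iff

end Helpers

section Main
open Filter ISemi

lemma delta_lemma {α : Type*} : ∀ (m : ℕ) (s : ℕ → Set α), (∀ k, (s k).encard ≤ (m : ℕ∞)) →
    ∃ (φ : ℕ → ℕ) (r : Set α), StrictMono φ ∧ (∀ k, r ⊆ s (φ k)) ∧
      ∀ p ∉ r, {k | p ∈ s (φ k)}.Finite := by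
  intro m
  induction m with
  | zero =>
    intro s hs
    refine ⟨id, ∅, strictMono_id, fun k => empty_subset _, fun p _ => ?_⟩
    have : ∀ k, s k = ∅ := fun k => by
      have := hs k; simpa [Set.encard_eq_zero, nonpos_iff_eq_zero] using this
    simp [this]
  | succ m ih =>
    intro s hs
    by_cases hall : ∀ p, {k | p ∈ s k}.Finite
    · exact ⟨id, ∅, strictMono_id, fun k => empty_subset _, fun p _ => hall p⟩
    · push_neg at hall
      obtain ⟨p, hp⟩ := hall
      have hpinf : {k | p ∈ s k}.Infinite := (Set.infinite_coe_iff.mp (by rwa [Set.infinite_coe_iff, Set.Infinite]))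
      have hinf : ∀ N, ∃ k > N, p ∈ s k := fun N =>
        let ⟨k, hk, hkN⟩ := hpinf.exists_gt N
        ⟨k, hkN, hk⟩
      obtain ⟨ψ, hψ, hψp⟩ := Nat.exists_strictMono_subsequence hinf
      have hs' : ∀ k, ((s (ψ k)) \ {p}).encard ≤ (m : ℕ∞) := by
        intro k
        have h1 : ((s (ψ k)) \ {p}).encard + 1 = (s (ψ k)).encard :=
          Set.encard_diff_singleton_add_one (hψp k)
        have h2 : ((s (ψ k)) \ {p}).encard + 1 ≤ (m : ℕ∞) + 1 := by
          rw [h1]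
          have := hs (ψ k)
          push_cast at this ⊢
          exact this
        exact (WithTop.add_le_add_iff_right (by exact ENat.one_ne_top)).1 h2
      obtain ⟨φ', r', hφ', hsub', hfin'⟩ := ih (fun k => s (ψ k) \ {p}) hs'
      refine ⟨ψ ∘ φ', insert p r', hψ.comp hφ', fun k => ?_, fun q hq => ?_⟩
      · refine insert_subset (hψp _) ((hsub' k).trans diff_subset)
      · have hq1 : q ≠ p := fun h => hq (h ▸ mem_insert _ _)
        have hq2 : q ∉ r' := fun h => hq (mem_insert_of_mem _ h)
        refine (hfin' q hq2).subset fun k hk => ?_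
        exact ⟨hk, by simpa using hq1⟩

lemma seq2 (ι : Type*) (n : ℕ) : @SeqCompactSpace (Elem ι n) (tauc ι n) := by
  classical
  letI : TopologicalSpace (Elem ι n) := tauc ι n
  refine ⟨fun u _ => ?_⟩
  obtain ⟨φ, r, hφ, hsub, hfin⟩ := delta_lemma n (fun k => Gr (u k)) (fun k => encard_Gr _)
  set f0 := u (φ 0) with hf0
  have hrf0 : r ⊆ Gr f0 := hsub 0
  set A : Set ι := Prod.fst '' r with hA
  have hAcard : A.encard ≤ (n : ℕ∞) :=
    le_trans (Set.encard_image_le _ _) (le_trans (Set.encard_mono hrf0) (encard_Gr f0))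
  have hofSet : {a : ι | ((PEquiv.ofSet A) a).isSome} = A := by
    ext a; by_cases h' : a ∈ A <;> simp [PEquiv.ofSet, h']
  set eA : Elem ι n := ⟨PEquiv.ofSet A, by rw [hofSet]; exact hAcard⟩ with heA
  set R : Elem ι n := eA * f0 with hR
  have hGrR : Gr R = r := by
    ext ⟨a, b⟩
    simp only [Gr, mem_setOf_eq, hR, mul_val]
    constructor
    · intro hab
      obtain ⟨c, hc, hf⟩ := (PEquiv.trans_eq_some _ _ _ _).1 hab
      obtain ⟨rfl, hcA⟩ : c = a ∧ c ∈ A := PEquiv.ofSet_eq_some_iff.1 hc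
      obtain ⟨⟨a', b'⟩, hb', ha'⟩ := hcA
      dsimp at ha'; subst ha'
      have hfb' : f0.1 a' = some b' := hrf0 hb'
      rw [hf] at hfb'
      injection hfb' with hbb
      rwa [← hbb] at hb'
    · intro hab
      refine (PEquiv.trans_eq_some _ _ _ _).2 ⟨a, ?_, hrf0 hab⟩
      exact PEquiv.ofSet_eq_some_iff.2 ⟨rfl, ⟨(a, b), hab, rfl⟩⟩
  refine ⟨R, mem_univ _, φ, hφ, ?_⟩
  refine TopologicalSpace.tendsto_nhds_generateFrom_iff.2 ?_
  rintro V ⟨f, F, hF, rfl⟩ hRV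
  obtain ⟨hfR, hRF⟩ := hRV
  have hfGr : Gr f ⊆ r := by rw [← hGrR]; exact nle_iff.1 hfR
  have hev1 : ∀ k, u (φ k) ∈ upset f := fun k =>
    mem_upset_iff.2 (hfGr.trans (hsub k))
  have hev2 : ∀ g ∈ F, ∀ᶠ k in atTop, u (φ k) ∉ upset g := by
    intro g hg
    have hgR : ¬ Gr g ⊆ r := by
      intro hcon
      exact hRF (mem_iUnion₂.2 ⟨g, hg, mem_upset_iff.2 (by rw [hGrR]; exact hcon)⟩)
    obtain ⟨p, hpg, hpr⟩ := not_subset.1 hgR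
    have hfinp : ∀ᶠ k in atTop, p ∉ Gr (u (φ k)) := by
      rw [← Nat.cofinite_eq_atTop]
      exact (hfin p hpr).compl_mem_cofinite
    exact hfinp.mono fun k hk hup => hk (mem_upset_iff.1 hup hpg)
  have hev3 : ∀ᶠ k in atTop, ∀ g ∈ F, u (φ k) ∉ upset g := (eventually_all_finset F).2 hev2
  have : ∀ᶠ k in atTop, (u ∘ φ) k ∈ upset f \ ⋃ g ∈ F, upset g := by
    refine hev3.mono fun k hk => ⟨hev1 k, fun hmem => ?_⟩
    obtain ⟨g, hg, hgup⟩ := mem_iUnion₂.1 hmem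
    exact hk g hg hgup
  exact this

end Main

section Part1
open Filter

lemma exists_mapClusterPt {X : Type*} [TopologicalSpace X]
    (hcc : ISemi.CountablyCompact X) (u : ℕ → X) : ∃ x : X, MapClusterPt x atTop u := by
  by_contra h
  push_neg at h
  set F : ℕ → Set X := fun m => closure (u '' Set.Ici m) with hF
  have hmem : ∀ m, u m ∈ F m := fun m => subset_closure ⟨m, le_refl m, rfl⟩
  have hanti : ∀ ⦃i j : ℕ⦄, i ≤ j → F j ⊆ F i := fun i j hij =>
    closure_mono (image_mono (Ici_subset_Ici.2 hij))
  have hempty : ∀ x : X, ∃ m, x ∉ F m := by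
    intro x
    by_contra hx
    push_neg at hx
    refine h x (mapClusterPt_iff_frequently.2 fun s hs => ?_)
    rw [frequently_atTop]
    intro m
    obtain ⟨y, hys, k, hk, rfl⟩ := mem_closure_iff_nhds.1 (hx m) s hs
    exact ⟨k, hk, hys⟩
  obtain ⟨𝒱, h𝒱sub, h𝒱fin, h𝒱cov⟩ := hcc (Set.range fun m => (F m)ᶜ)
    (countable_range _) (by rintro U ⟨m, rfl⟩; exact isClosed_closure.isOpen_compl)
    (by
      ext x
      simp only [mem_sUnion, mem_range, mem_univ, iff_true]
      obtain ⟨m, hm⟩ := hempty x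
      exact ⟨(F m)ᶜ, ⟨m, rfl⟩, hm⟩)
  have hsel : ∀ V ∈ 𝒱, ∃ m, V = (F m)ᶜ := fun V hV => by
    obtain ⟨m, rfl⟩ := h𝒱sub hV; exact ⟨m, rfl⟩
  choose! g hg using hsel
  obtain ⟨m0, hm0⟩ := (h𝒱fin.image g).bddAbove
  have : u m0 ∈ ⋃₀ 𝒱 := h𝒱cov ▸ mem_univ _
  obtain ⟨V, hV, huV⟩ := this
  rw [hg V hV] at huV
  exact huV (hanti (hm0 ⟨V, hV, rfl⟩) (hmem m0))

lemma part1 {X : Type u} (tX : TopologicalSpace X) (hcc : @ISemi.CountablyCompact X tX)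
    (hsc : @ISemi.Scattered X tX) (ht3 : @T3Space X tX) : @SeqCompactSpace X tX := by
  constructor
  intro u _
  set D : Set X := {x | MapClusterPt x atTop u} with hD
  obtain ⟨x, hxD, U, hUopen, hUD⟩ := hsc D (exists_mapClusterPt hcc u)
  have hxU : x ∈ U := by
    have : x ∈ U ∩ D := hUD ▸ rfl
    exact this.1
  obtain ⟨C, ⟨hCnhds, hCclosed⟩, hCU⟩ :=
    (closed_nhds_basis x).mem_iff.1 (hUopen.mem_nhds hxU)
  obtain ⟨φ, hφ, hφC⟩ := extraction_of_frequently_atTop (mapClusterPt_iff_frequently.1 hxD C hCnhds)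
  refine ⟨x, mem_univ _, φ, hφ, ?_⟩
  by_contra hten
  obtain ⟨s, hs, hfreq⟩ := not_tendsto_iff_exists_frequently_notMem.1 hten
  set s' : Set X := interior s with hs'
  have hxs' : x ∈ s' := mem_interior_iff_mem_nhds.2 hs
  have hfreq' : ∃ᶠ k in atTop, u (φ k) ∉ s' := by
    refine hfreq.mono fun k hk => fun hk' => hk (interior_subset hk')
  obtain ⟨ψ, hψ, hψs⟩ := extraction_of_frequently_atTop hfreq'
  set w : ℕ → X := u ∘ φ ∘ ψ with hw
  obtain ⟨z, hz⟩ := exists_mapClusterPt hcc w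
  have hzD : z ∈ D := by
    exact MapClusterPt.of_comp ((hφ.comp hψ).tendsto_atTop) hz
  have hzcl : ∀ T : Set X, IsClosed T → (∀ k, w k ∈ T) → z ∈ T := by
    intro T hT hTk
    have : z ∈ closure (Set.range w) := by
      refine mem_closure_iff_nhds.2 fun t ht => ?_
      obtain ⟨k, hk⟩ := (mapClusterPt_iff_frequently.1 hz t ht).exists
      exact ⟨w k, hk, k, rfl⟩
    exact hT.closure_subset_iff.2 (Set.range_subset_iff.2 hTk) this
  have hzC : z ∈ C := hzcl C hCclosed fun k => hφC (ψ k)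
  have hzx : z = x := by
    have : z ∈ U ∩ D := ⟨hCU hzC, hzD⟩
    rwa [hUD, mem_singleton_iff] at this
  have hzs' : z ∈ s'ᶜ := hzcl s'ᶜ isOpen_interior.isClosed_compl fun k => hψs k
  exact hzs' (hzx ▸ hxs')

end Part1

theorem stmt14 (ι : Type*) [Infinite ι] (n : ℕ) (hn : 0 < n) :
    (∀ (X : Type u) (tX : TopologicalSpace X), @ISemi.CountablyCompact X tX →
      @ISemi.Scattered X tX → @T3Space X tX → @SeqCompactSpace X tX) ∧
    @SeqCompactSpace (ISemi.Elem ι n) (tauc ι n) := by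
  exact ⟨fun X tX hcc hsc ht3 => part1 tX hcc hsc ht3, seq2 ι n⟩
end

section
/- Let n be a positive integer and λ an infinite cardinal, and let τ be a d-feebly compact shift-continuous T₁ topology on I_λ^n. Then the set of elements of rank exactly n, I_λ^n \ I_λ^{n-1}, is dense in (I_λ^n, τ). -/
open Set Topology

universe v

open scoped Classical in
noncomputable def idOnP {ι : Type*} (s : Set ι) : ι ≃. ι where
  toFun a := if a ∈ s then some a else none
  invFun a := if a ∈ s then some a else none
  inv a b := by
    classical
    by_cases ha : a ∈ s <;> by_cases hb : b ∈ s
    · simp [ha, hb, Option.mem_def, eq_comm]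
    · simp only [if_pos ha, if_neg hb, Option.mem_def]
      constructor
      · intro h; simp at h
      · intro h; rw [Option.some_inj] at h; subst h; exact absurd ha hb
    · simp only [if_neg ha, if_pos hb, Option.mem_def]
      constructor
      · intro h; rw [Option.some_inj] at h; subst h; exact absurd hb ha
      · intro h; simp at h
    · simp [ha, hb]

open scoped Classical in
lemma idOnP_apply_of_mem {ι : Type*} {s : Set ι} {a : ι} (h : a ∈ s) : idOnP s a = some a := by
  simp [idOnP, h]
open scoped Classical in
lemma idOnP_apply_of_not_mem {ι : Type*} {s : Set ι} {a : ι} (h : a ∉ s) : idOnP s a = none := by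
  simp [idOnP, h]
open scoped Classical in
lemma idOnP_dom {ι : Type*} (s : Set ι) : {a | ((idOnP s) a).isSome} = s := by
  ext a; by_cases h : a ∈ s <;> simp [idOnP, h]


open scoped Classical in
noncomputable def extendIdP {ι : Type*} (f : ι ≃. ι) (s : Set ι)
    (hd : ∀ a ∈ s, f a = none) (hr : ∀ a ∈ s, f.symm a = none) : ι ≃. ι where
  toFun a := if a ∈ s then some a else f a
  invFun b := if b ∈ s then some b else f.symm b
  inv a b := by
    by_cases ha : a ∈ s <;> by_cases hb : b ∈ s
    · simp [ha, hb, Option.mem_def, eq_comm]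
    · simp only [if_pos ha, if_neg hb, Option.mem_def]
      constructor
      · intro h
        have h2 : b ∈ f a := (PEquiv.mem_iff_mem f).1 (Option.mem_def.2 h)
        rw [hd a ha] at h2; simp at h2
      · intro h
        rw [Option.some_inj] at h; subst h; exact absurd ha hb
    · simp only [if_neg ha, if_pos hb, Option.mem_def]
      constructor
      · intro h; rw [Option.some_inj] at h; subst h; exact absurd hb ha
      · intro h
        have h2 : a ∈ f.symm b := (PEquiv.mem_iff_mem f).2 (Option.mem_def.2 h)
        rw [hr b hb] at h2; simp at h2
    · simp only [if_neg ha, if_neg hb, Option.mem_def]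
      exact ⟨fun h => Option.mem_def.1 ((PEquiv.mem_iff_mem f).1 (Option.mem_def.2 h)),
        fun h => Option.mem_def.1 ((PEquiv.mem_iff_mem f).2 (Option.mem_def.2 h))⟩

open scoped Classical in
lemma extendIdP_apply_of_mem {ι : Type*} {f : ι ≃. ι} {s : Set ι} {hd} {hr} {a : ι} (h : a ∈ s) :
    extendIdP f s hd hr a = some a := by simp [extendIdP, h]

open scoped Classical in
lemma extendIdP_apply_of_not_mem {ι : Type*} {f : ι ≃. ι} {s : Set ι} {hd} {hr} {a : ι} (h : a ∉ s) :
    extendIdP f s hd hr a = f a := by simp [extendIdP, h]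

open scoped Classical in
lemma extendIdP_dom {ι : Type*} (f : ι ≃. ι) (s : Set ι) (hd) (hr) :
    {a | ((extendIdP f s hd hr) a).isSome} = s ∪ {a | (f a).isSome} := by
  ext a; by_cases h : a ∈ s <;> simp [extendIdP, h]


namespace ISemiAux
open ISemi

variable {ι : Type*} {n : ℕ}

lemma mul_apply (f g : Elem ι n) (a : ι) : (f * g).1 a = (f.1 a).bind g.1 := rfl

lemma elem_ext {f g : Elem ι n} (h : ∀ a, f.1 a = g.1 a) : f = g := Subtype.ext (PEquiv.ext h)

/-- extension order: `g` extends `f` -/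
def Ext (f g : Elem ι n) : Prop := ∀ a b, f.1 a = some b → g.1 a = some b

lemma ext_refl (f : Elem ι n) : Ext f f := fun _ _ h => h

lemma dom_encard (f : Elem ι n) : (dom f).encard ≤ (n : ℕ∞) := f.2

lemma ran_encard (f : Elem ι n) : (ran f).encard ≤ (n : ℕ∞) := (ISemi.inv f).2

lemma dom_finite (f : Elem ι n) : (dom f).Finite := by
  rw [← Set.encard_lt_top_iff]
  exact lt_of_le_of_lt (dom_encard f) (WithTop.coe_lt_top n)

lemma ran_finite (f : Elem ι n) : (ran f).Finite := by
  rw [← Set.encard_lt_top_iff]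
  exact lt_of_le_of_lt (ran_encard f) (WithTop.coe_lt_top n)

lemma mem_dom_iff {f : Elem ι n} {a : ι} : a ∈ dom f ↔ ∃ b, f.1 a = some b := by
  simp [ISemi.dom, Option.isSome_iff_exists]

lemma mem_ran_of_eq_some {f : Elem ι n} {a b : ι} (h : f.1 a = some b) : b ∈ ran f := by
  have h2 : a ∈ f.1.symm b := (PEquiv.mem_iff_mem f.1).2 (Option.mem_def.2 h)
  have h3 : (f.1.symm b).isSome := Option.isSome_iff_exists.2 ⟨a, Option.mem_def.1 h2⟩
  exact h3

lemma not_mem_dom_iff {f : Elem ι n} {a : ι} : a ∉ dom f ↔ f.1 a = none := by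
  rw [mem_dom_iff]
  simp [Option.eq_none_iff_forall_not_mem, Option.mem_def]

noncomputable def idOn (s : Set ι) (hs : s.encard ≤ (n : ℕ∞)) : Elem ι n :=
  ⟨idOnP s, by rw [show {a : ι | (idOnP s a).isSome} = s from idOnP_dom s]; exact hs⟩

/-- the graph of a partial bijection -/
def graph (g : Elem ι n) : Set (ι × ι) := {p | g.1 p.1 = some p.2}

lemma graph_injective : Function.Injective (graph (ι := ι) (n := n)) := by
  intro g g' h
  apply elem_ext
  intro a
  cases hg : g.1 a with
  | some b =>
    have hm : (a, b) ∈ graph g := hg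
    rw [h] at hm
    exact hm.symm
  | none =>
    cases hg' : g'.1 a with
    | some b =>
      have hm : (a, b) ∈ graph g' := hg'
      rw [← h] at hm
      rw [show g.1 a = some b from hm] at hg
      exact hg.symm
    | none => rfl

lemma finite_F (f : Elem ι n) :
    {g : Elem ι n | dom g ⊆ dom f ∧ ∀ a b, g.1 a = some b → b ∈ ran f}.Finite := by
  have h1 : ((dom f) ×ˢ (ran f)).Finite := (dom_finite f).prod (ran_finite f)
  have h2 : {t : Set (ι × ι) | t ⊆ (dom f) ×ˢ (ran f)}.Finite := h1.finite_subsets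
  have h3 : ((graph (ι := ι) (n := n)) ⁻¹' {t : Set (ι × ι) | t ⊆ (dom f) ×ˢ (ran f)}).Finite :=
    h2.preimage graph_injective.injOn
  refine h3.subset ?_
  rintro g ⟨hg1, hg2⟩ ⟨a, b⟩ hab
  exact ⟨hg1 (mem_dom_iff.2 ⟨b, hab⟩), hg2 a b hab⟩

section Topo

variable [TopologicalSpace (Elem ι n)] [T1Space (Elem ι n)]

/-- restriction of `x` to the domain and range of `f`, as a double translation -/
noncomputable def restr (f : Elem ι n) (x : Elem ι n) : Elem ι n :=
  idOn (dom f) (dom_encard f) * x * idOn (ran f) (ran_encard f)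

lemma restr_apply (f x : Elem ι n) (a : ι) :
    (restr f x).1 a = ((idOnP (dom f) a).bind x.1).bind (idOnP (ran f)) := rfl

lemma restr_continuous (hshift : ShiftContinuous ι n) (f : Elem ι n) :
    Continuous (restr f) := by
  have h1 := (hshift (idOn (dom f) (dom_encard f))).1
  have h2 := (hshift (idOn (ran f) (ran_encard f))).2
  exact h2.comp h1

/-- if `x` extends `f` then restricting `x` to the domain/range of `f` gives `f` -/
lemma restr_eq_of_ext {f x : Elem ι n} (h : Ext f x) : restr f x = f := by
  apply elem_ext
  intro a
  rw [restr_apply]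
  by_cases ha : a ∈ dom f
  · obtain ⟨b, hb⟩ := mem_dom_iff.1 ha
    rw [idOnP_apply_of_mem ha, Option.bind_some, h a b hb, Option.bind_some,
      idOnP_apply_of_mem (mem_ran_of_eq_some hb), hb]
  · rw [idOnP_apply_of_not_mem ha, Option.bind_none, Option.bind_none,
      (not_mem_dom_iff.1 ha).symm]

/-- if `f` extends `x` then restricting `x` to the domain/range of `f` gives `x` back -/
lemma restr_eq_self_of_ext {f x : Elem ι n} (h : Ext x f) : restr f x = x := by
  apply elem_ext
  intro a
  rw [restr_apply]
  cases hx : x.1 a with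
  | some b =>
    have hfa : f.1 a = some b := h a b hx
    rw [idOnP_apply_of_mem (mem_dom_iff.2 ⟨b, hfa⟩), Option.bind_some, hx, Option.bind_some,
      idOnP_apply_of_mem (mem_ran_of_eq_some hfa)]
  | none =>
    by_cases ha : a ∈ dom f
    · rw [idOnP_apply_of_mem ha, Option.bind_some, hx, Option.bind_none]
    · rw [idOnP_apply_of_not_mem ha, Option.bind_none, Option.bind_none]

lemma restr_mem_F (f x : Elem ι n) :
    dom (restr f x) ⊆ dom f ∧ ∀ a b, (restr f x).1 a = some b → b ∈ ran f := by
  constructor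
  · intro a ha
    obtain ⟨b, hb⟩ := mem_dom_iff.1 ha
    rw [restr_apply] at hb
    obtain ⟨c, hc, _⟩ := Option.bind_eq_some_iff.1 hb
    obtain ⟨d, hd, _⟩ := Option.bind_eq_some_iff.1 hc
    by_contra hna
    rw [idOnP_apply_of_not_mem hna] at hd
    exact nomatch hd
  · intro a b hb
    rw [restr_apply] at hb
    obtain ⟨c, _, hc⟩ := Option.bind_eq_some_iff.1 hb
    by_contra hnb
    by_cases hcr : c ∈ ran f
    · rw [idOnP_apply_of_mem hcr] at hc
      rw [Option.some_inj] at hc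
      exact hnb (hc ▸ hcr)
    · rw [idOnP_apply_of_not_mem hcr] at hc
      exact nomatch hc

/-- Key lemma: every point has an open neighbourhood consisting of its extensions. -/
lemma exists_ext_nhd (hshift : ShiftContinuous ι n) (f : Elem ι n) :
    ∃ V : Set (Elem ι n), IsOpen V ∧ f ∈ V ∧ ∀ g ∈ V, Ext f g := by
  classical
  set F := {g : Elem ι n | dom g ⊆ dom f ∧ ∀ a b, g.1 a = some b → b ∈ ran f} with hF
  refine ⟨restr f ⁻¹' (F \ {f})ᶜ, ?_, ?_, ?_⟩
  · exact (((finite_F f).diff (t := {f})).isClosed.isOpen_compl).preimage (restr_continuous hshift f)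
  · simp only [Set.mem_preimage, restr_eq_of_ext (ext_refl f)]
    intro hmem
    exact hmem.2 rfl
  · intro g hg
    have h1 : restr f g ∉ F \ {f} := hg
    have h2 : restr f g ∈ F := restr_mem_F f g
    have h3 : restr f g = f := by
      by_contra hne
      exact h1 ⟨h2, hne⟩
    intro a b hb
    have h4 := h3 ▸ (restr_apply f g a)
    rw [hb] at h4
    obtain ⟨c, hc, hc2⟩ := Option.bind_eq_some_iff.1 h4.symm
    obtain ⟨d, hd, hd2⟩ := Option.bind_eq_some_iff.1 hc
    by_cases hcr : c ∈ ran f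
    · rw [idOnP_apply_of_mem hcr, Option.some_inj] at hc2
      subst hc2
      by_cases had : a ∈ dom f
      · rw [idOnP_apply_of_mem had, Option.some_inj] at hd
        subst hd
        exact hd2
      · rw [idOnP_apply_of_not_mem had] at hd
        exact nomatch hd
    · rw [idOnP_apply_of_not_mem hcr] at hc2
      exact nomatch hc2

/-- elements of full rank are isolated -/
lemma isolated_of_rank_eq (hshift : ShiftContinuous ι n) {f : Elem ι n}
    (hf : (dom f).encard = (n : ℕ∞)) : IsOpen ({f} : Set (Elem ι n)) := by
  obtain ⟨V, hVo, hfV, hV⟩ := exists_ext_nhd hshift f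
  have hVeq : V = {f} := by
    apply Set.Subset.antisymm
    · intro g hg
      have hext := hV g hg
      have hsub : dom f ⊆ dom g := by
        intro a ha
        obtain ⟨b, hb⟩ := mem_dom_iff.1 ha
        exact mem_dom_iff.2 ⟨b, hext a b hb⟩
      have hdeq : dom f = dom g :=
        (dom_finite f).eq_of_subset_of_encard_le hsub (by rw [hf]; exact dom_encard g)
      have hgf : g = f := by
        apply elem_ext
        intro a
        cases hfa : f.1 a with
        | some b => rw [hext a b hfa]
        | none =>
          have hnd : a ∉ dom g := by
            rw [← hdeq]
            exact not_mem_dom_iff.2 hfa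
          simp [not_mem_dom_iff.1 hnd, hfa]
      exact hgf
    · intro g hg
      rw [Set.mem_singleton_iff.1 hg]
      exact hfV
  rw [← hVeq]
  exact hVo

end Topo


theorem main (ι : Type*) [Infinite ι] (n : ℕ) (hn : 0 < n)
    [TopologicalSpace (Elem ι n)] [T1Space (Elem ι n)]
    (hshift : ShiftContinuous ι n) (hd : DFeeblyCompact (Elem ι n)) :
    Dense {f : Elem ι n | rank f = (n : ℕ∞)} := by
  classical
  rw [dense_iff_inter_open]
  by_contra hcon
  push_neg at hcon
  obtain ⟨U, hUo, hUne, hUdis⟩ := hcon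
  obtain ⟨f, hfU⟩ := hUne
  have hnotrank : ∀ g ∈ U, (dom g).encard ≠ (n : ℕ∞) := by
    intro g hg hr
    have hmem : g ∈ U ∩ {f : Elem ι n | rank f = (n : ℕ∞)} := ⟨hg, hr⟩
    rw [hUdis] at hmem
    exact hmem
  have hffin := dom_finite f
  set m := hffin.toFinset.card with hm
  have hfen : (dom f).encard = (m : ℕ∞) := hffin.encard_eq_coe_toFinset_card
  have hmn : m < n := by
    have h1 : (dom f).encard < (n : ℕ∞) := lt_of_le_of_ne (dom_encard f) (hnotrank f hfU)
    rw [hfen] at h1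
    exact_mod_cast h1
  set q := n - m with hqdef
  have hq : 0 < q := Nat.sub_pos_of_lt hmn
  have hqm : q + m = n := Nat.sub_add_cancel hmn.le
  have hsinf : (Set.univ \ (dom f ∪ ran f)).Infinite :=
    Set.infinite_univ.diff ((dom_finite f).union (ran_finite f))
  set e := hsinf.natEmbedding with he
  set p : ℕ → ι := fun k => (e k : ι) with hp
  have hp_inj : Function.Injective p := fun a b hab => e.injective (Subtype.ext hab)
  have hp_mem : ∀ k, p k ∉ dom f ∪ ran f := fun k => (e k).2.2
  set B : ℕ → Finset ι := fun k => (Finset.range q).image (fun i => p (Nat.pair k i)) with hB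
  have hpk_inj : ∀ k, Function.Injective (fun i => p (Nat.pair k i)) := by
    intro k i j hij
    exact (Nat.pair_eq_pair.1 (hp_inj hij)).2
  have hBcard : ∀ k, (B k).card = q := by
    intro k
    rw [hB]
    simp only []
    rw [Finset.card_image_of_injective _ (hpk_inj k), Finset.card_range]
  have hB_mem : ∀ k a, a ∈ (B k : Set ι) ↔ ∃ i, i < q ∧ p (Nat.pair k i) = a := by
    intro k a
    simp [hB, Finset.mem_image, Finset.mem_range]
  have hB_not : ∀ k a, a ∈ (B k : Set ι) → a ∉ dom f ∪ ran f := by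
    intro k a ha
    obtain ⟨i, _, rfl⟩ := (hB_mem k a).1 ha
    exact hp_mem _
  have hBD : ∀ k, ∀ a ∈ (B k : Set ι), f.1 a = none := by
    intro k a ha
    exact not_mem_dom_iff.1 fun h => hB_not k a ha (Or.inl h)
  have hBR : ∀ k, ∀ a ∈ (B k : Set ι), f.1.symm a = none := by
    intro k a ha
    have hmem : a ∉ ran f := fun h => hB_not k a ha (Or.inr h)
    exact Option.not_isSome_iff_eq_none.1 hmem
  have hBB : ∀ {k j a}, k ≠ j → a ∈ (B k : Set ι) → a ∈ (B j : Set ι) → False := by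
    intro k j a hkj hak haj
    obtain ⟨i, _, hi⟩ := (hB_mem k a).1 hak
    obtain ⟨i', _, hi'⟩ := (hB_mem j a).1 haj
    rw [← hi'] at hi
    exact hkj (Nat.pair_eq_pair.1 (hp_inj hi)).1
  have hdisj : ∀ k, Disjoint (B k : Set ι) (dom f) := by
    intro k
    rw [Set.disjoint_left]
    intro a ha hda
    exact hB_not k a ha (Or.inl hda)
  have hHenc : ∀ k, ((B k : Set ι) ∪ dom f).encard = (n : ℕ∞) := by
    intro k
    rw [Set.encard_union_eq (hdisj k), Set.encard_coe_eq_coe_finsetCard, hBcard k, hfen]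
    exact_mod_cast hqm
  set H : ℕ → Elem ι n := fun k =>
    ⟨extendIdP f.1 (↑(B k)) (hBD k) (hBR k), by
      rw [extendIdP_dom]
      exact le_of_eq (hHenc k)⟩ with hH
  have hH_mem : ∀ k a, a ∈ (B k : Set ι) → (H k).1 a = some a := by
    intro k a ha
    show extendIdP f.1 (↑(B k)) (hBD k) (hBR k) a = some a
    exact extendIdP_apply_of_mem ha
  have hH_not : ∀ k a, a ∉ (B k : Set ι) → (H k).1 a = f.1 a := by
    intro k a ha
    show extendIdP f.1 (↑(B k)) (hBD k) (hBR k) a = f.1 a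
    exact extendIdP_apply_of_not_mem ha
  have hH_ext : ∀ k, Ext f (H k) := by
    intro k a b hab
    have ha : a ∉ (B k : Set ι) := fun h => by
      rw [hBD k a h] at hab
      exact nomatch hab
    rw [hH_not k a ha]
    exact hab
  have hH_rank : ∀ k, (dom (H k)).encard = (n : ℕ∞) := by
    intro k
    have hdom : dom (H k) = (B k : Set ι) ∪ dom f := extendIdP_dom f.1 (↑(B k)) (hBD k) (hBR k)
    rw [hdom]
    exact hHenc k
  have hH_inj : Function.Injective H := by
    intro k j hkj
    by_contra hne
    have hb : p (Nat.pair k 0) ∈ (B k : Set ι) := (hB_mem k _).2 ⟨0, hq, rfl⟩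
    have hb' : p (Nat.pair k 0) ∉ (B j : Set ι) := fun h => hBB hne hb h
    have h1 : (H k).1 (p (Nat.pair k 0)) = some (p (Nat.pair k 0)) := hH_mem k _ hb
    have h2 : (H j).1 (p (Nat.pair k 0)) = none := by
      rw [hH_not j _ hb']
      exact not_mem_dom_iff.1 fun h => hp_mem (Nat.pair k 0) (Or.inl h)
    rw [hkj, h2] at h1
    exact nomatch h1
  set 𝒰 : Set (Set (Elem ι n)) := Set.range (fun k => ({H k} : Set (Elem ι n))) with h𝒰
  have hopen : ∀ W ∈ 𝒰, IsOpen W := by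
    rintro W ⟨k, rfl⟩
    exact isolated_of_rank_eq hshift (hH_rank k)
  have hdisc : ∀ x : Elem ι n, ∃ V ∈ 𝓝 x, {W ∈ 𝒰 | (W ∩ V).Nonempty}.Subsingleton := by
    intro x
    by_cases hxU : x ∈ U
    · refine ⟨U, hUo.mem_nhds hxU, ?_⟩
      rintro W ⟨⟨k, rfl⟩, ⟨y, hy1, hy2⟩⟩ W' _
      exfalso
      rw [Set.mem_singleton_iff.1 hy1] at hy2
      exact hnotrank _ hy2 (hH_rank k)
    · by_cases hxf : Ext x f
      · have hVo : IsOpen (restr f ⁻¹' ({f}ᶜ)) :=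
          (isClosed_singleton.isOpen_compl).preimage (restr_continuous hshift f)
        have hxV : x ∈ restr f ⁻¹' ({f}ᶜ) := by
          simp only [Set.mem_preimage, restr_eq_self_of_ext hxf, Set.mem_compl_iff,
            Set.mem_singleton_iff]
          intro hxeq
          rw [hxeq] at hxU
          exact hxU hfU
        refine ⟨restr f ⁻¹' ({f}ᶜ), hVo.mem_nhds hxV, ?_⟩
        rintro W ⟨⟨k, rfl⟩, ⟨y, hy1, hy2⟩⟩ W' _
        exfalso
        rw [Set.mem_singleton_iff.1 hy1] at hy2
        rw [Set.mem_preimage, restr_eq_of_ext (hH_ext k)] at hy2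
        exact hy2 rfl
      · obtain ⟨V, hVo, hxV, hV⟩ := exists_ext_nhd hshift x
        refine ⟨V, hVo.mem_nhds hxV, ?_⟩
        rintro W ⟨⟨k, rfl⟩, ⟨y, hy1, hy2⟩⟩ W' ⟨⟨j, rfl⟩, ⟨z, hz1, hz2⟩⟩
        rw [Set.mem_singleton_iff.1 hy1] at hy2
        rw [Set.mem_singleton_iff.1 hz1] at hz2
        have hk : Ext x (H k) := hV _ hy2
        have hj : Ext x (H j) := hV _ hz2
        have hkeqj : k = j := by
          by_contra hkj
          apply hxf
          intro a b hab
          have h1 := hk a b hab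
          have h2 := hj a b hab
          by_cases haBk : a ∈ (B k : Set ι)
          · by_cases haBj : a ∈ (B j : Set ι)
            · exact absurd (hBB hkj haBk haBj) not_false
            · rw [hH_not j a haBj] at h2
              exact h2
          · rw [hH_not k a haBk] at h1
            exact h1
        rw [hkeqj]
  have hfin := hd 𝒰 hopen hdisc
  have hinf : 𝒰.Infinite := by
    rw [h𝒰]
    exact Set.infinite_range_of_injective (Set.singleton_injective.comp hH_inj)
  exact hinf hfin

end ISemiAux

theorem stmt15 (ι : Type*) [Infinite ι] (n : ℕ) (hn : 0 < n)
    [TopologicalSpace (ISemi.Elem ι n)] [T1Space (ISemi.Elem ι n)]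
    (hshift : ISemi.ShiftContinuous ι n)
    (hd : ISemi.DFeeblyCompact (ISemi.Elem ι n)) :
    Dense {f : ISemi.Elem ι n | ISemi.rank f = (n : ℕ∞)} :=
  ISemiAux.main ι n hn hshift hd
end
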